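/- Let (Ω, ℱ, P) be a probability space with Ω a standard Borel space, 𝒳 a standard Borel space, X : Ω → 𝒳 measurable, A : Ω → {−1, 1} a random variable, and T, C : Ω → ℝ random variables with 0 ≤ T ≤ h almost surely for some h > 0, such that T and C are conditionally independent given σ(X, A). Set Y = min(T, C) and Δ = 1{T ≤ C}. Let κ be a regular conditional distribution of C given (X, A), set S_C(t, x, a) = κ(x, a)([t, ∞)), and assume S_C(h, X, A) ≥ η_C almost surely for some η_C > 0. Let π : {−1,1} × 𝒳 → ℝ be measurable with η ≤ π ≤ 1 for some η > 0, let d : 𝒳 → {−1, 1} be measurable, and let τ ∈ ℝ. Then for every c ≥ 0, E[max(0, c(τ − T) + 1) · 1{A = d(X)} / π(A, X)] = E[Δ·max(0, c(τ − Y) + 1) · 1{A = d(X)} / (S_C(Y, X, A)·π(A, X))], and consequently inf_{c ≥ 0} E[max(0, c(τ − T) + 1)·1{A = d(X)}/π(A, X)] = inf_{c ≥ 0} E[Δ·max(0, c(τ − Y) + 1)·1{A = d(X)}/(S_C(Y, X, A)·π(A, X))]. -/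

import Mathlib

open MeasureTheory ProbabilityTheory
open Set Filter Topology
open scoped NNReal ENNReal

section helpers

noncomputable def dyF (n : ℕ) (t : ℝ) : ℝ := ((⌊t * 2 ^ n⌋ : ℤ) : ℝ) / 2 ^ n

lemma dyF_le (n : ℕ) (t : ℝ) : dyF n t ≤ t := by
  rw [dyF, div_le_iff₀ (by positivity)]
  exact Int.floor_le _

lemma dyF_lt (n : ℕ) (t : ℝ) : t - ((2:ℝ) ^ n)⁻¹ < dyF n t := by
  rw [dyF, lt_div_iff₀ (by positivity)]
  have h1 := Int.sub_one_lt_floor (t * 2 ^ n)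
  have h2 : ((2:ℝ) ^ n)⁻¹ * 2 ^ n = 1 := inv_mul_cancel₀ (by positivity)
  nlinarith [h1, h2]

lemma dyF_mono (t : ℝ) : Monotone fun n => dyF n t := by
  apply monotone_nat_of_le_succ
  intro n
  rw [dyF, dyF, div_le_div_iff₀ (by positivity) (by positivity)]
  have h1 : ((⌊t * 2 ^ n⌋ : ℤ) : ℝ) * 2 ≤ (⌊t * 2 ^ (n+1)⌋ : ℤ) := by
    rw [← Int.cast_two, ← Int.cast_mul]
    apply Int.cast_le.mpr
    rw [Int.le_floor]
    push_cast
    calc ((⌊t * 2 ^ n⌋ : ℤ) : ℝ) * 2 ≤ t * 2 ^ n * 2 := by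
          nlinarith [Int.floor_le (t * 2 ^ n)]
      _ = t * 2 ^ (n+1) := by ring
  calc ((⌊t * 2 ^ n⌋ : ℤ) : ℝ) * 2 ^ (n+1) = (((⌊t * 2 ^ n⌋ : ℤ) : ℝ) * 2) * 2 ^ n := by ring
    _ ≤ ((⌊t * 2 ^ (n+1)⌋ : ℤ) : ℝ) * 2 ^ n := by
        apply mul_le_mul_of_nonneg_right h1 (by positivity)

lemma dyF_tendsto (t : ℝ) : Tendsto (fun n => dyF n t) atTop (𝓝 t) := by
  apply tendsto_of_tendsto_of_tendsto_of_le_of_le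
    (g := fun n => t - ((2:ℝ) ^ n)⁻¹) (h := fun _ => t)
  · have : Tendsto (fun n : ℕ => ((2:ℝ) ^ n)⁻¹) atTop (𝓝 0) :=
      tendsto_inv_atTop_zero.comp (tendsto_pow_atTop_atTop_of_one_lt (by norm_num))
    simpa using tendsto_const_nhds.sub this
  · exact tendsto_const_nhds
  · exact fun n => (dyF_lt n t).le
  · exact fun n => dyF_le n t

lemma iInter_Ici_dyF (t : ℝ) : ⋂ n, Ici (dyF n t) = Ici t := by
  ext c
  simp only [mem_iInter, mem_Ici]
  constructor
  · intro hc
    exact le_of_tendsto (dyF_tendsto t) (Eventually.of_forall hc)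
  · exact fun hc n => (dyF_le n t).trans hc

lemma tendsto_S (μ : Measure ℝ) [IsFiniteMeasure μ] (t : ℝ) :
    Tendsto (fun n => (μ (Ici (dyF n t))).toReal) atTop (𝓝 ((μ (Ici t)).toReal)) := by
  have h1 : Tendsto (fun n => μ (Ici (dyF n t))) atTop (𝓝 (μ (Ici t))) := by
    rw [← iInter_Ici_dyF t]
    exact tendsto_measure_iInter_atTop (fun n => measurableSet_Ici.nullMeasurableSet)
      (fun a b hab => Ici_subset_Ici.mpr (dyF_mono t hab)) ⟨0, measure_ne_top _ _⟩
  exact (ENNReal.tendsto_toReal (measure_ne_top _ _)).comp h1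

lemma measS {𝒳 : Type*} [MeasurableSpace 𝒳] (κ : 𝒳 → ℝ → Measure ℝ)
    (hκprob : ∀ x a, IsProbabilityMeasure (κ x a))
    (hκmeas : ∀ B : Set ℝ, MeasurableSet B →
      Measurable fun p : 𝒳 × ℝ => (κ p.1 p.2 B).toReal) :
    Measurable fun q : ℝ × 𝒳 × ℝ => (κ q.2.1 q.2.2 (Set.Ici q.1)).toReal := by
  apply measurable_of_tendsto_metrizable
    (f := fun n (q : ℝ × 𝒳 × ℝ) => (κ q.2.1 q.2.2 (Ici (dyF n q.1))).toReal)
  · intro n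
    have h1 : Measurable fun r : (𝒳 × ℝ) × ℤ =>
        (κ r.1.1 r.1.2 (Ici ((r.2 : ℝ) / 2 ^ n))).toReal :=
      measurable_from_prod_countable_left fun k =>
        hκmeas (Ici ((k : ℝ) / 2 ^ n)) measurableSet_Ici
    exact h1.comp (measurable_snd.prodMk
      (Int.measurable_floor.comp (measurable_fst.mul_const _)))
  · rw [tendsto_pi_nhds]
    intro q
    haveI := hκprob q.2.1 q.2.2
    exact tendsto_S (κ q.2.1 q.2.2) q.1

end helpers

/-- Buffered-criterion part of Lemma 2 of the paper. With right-censored data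
`Y = min(T,C)`, `Δ = 1{T ≤ C}`, conditional censoring survival function
`S_C(t,x,a) = κ x a [t,∞)` and propensity `π`, for every `c ≥ 0`,
`E[max(0, c(τ-T)+1)·1{A=d(X)}/π(A,X)]
  = E[Δ·max(0, c(τ-Y)+1)·1{A=d(X)}/(S_C(Y,X,A)π(A,X))]`,
and consequently the corresponding infima over `c ≥ 0` agree. -/
theorem stmt_5 {Ω 𝒳 : Type*} [mΩ : MeasurableSpace Ω] [StandardBorelSpace Ω]
    [MeasurableSpace 𝒳]
    (P : Measure Ω) [IsProbabilityMeasure P]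
    (X : Ω → 𝒳) (hX : Measurable X)
    (A : Ω → ℝ) (hA : Measurable A) (hAval : ∀ ω, A ω = 1 ∨ A ω = -1)
    (T C : Ω → ℝ) (hT : Measurable T) (hC : Measurable C)
    (h : ℝ) (hh : 0 < h) (hTb : ∀ᵐ ω ∂P, 0 ≤ T ω ∧ T ω ≤ h)
    (hindep : CondIndepFun (MeasurableSpace.comap (fun ω => (X ω, A ω)) inferInstance)
      ((hX.prodMk hA).comap_le) T C P)
    (κ : 𝒳 → ℝ → Measure ℝ) (hκprob : ∀ x a, IsProbabilityMeasure (κ x a))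
    (hκmeas : ∀ B : Set ℝ, MeasurableSet B →
      Measurable fun p : 𝒳 × ℝ => (κ p.1 p.2 B).toReal)
    (hκver : ∀ B : Set ℝ, MeasurableSet B →
      (fun ω => (κ (X ω) (A ω) B).toReal) =ᵐ[P]
        P[fun ω => B.indicator (fun _ => (1 : ℝ)) (C ω) |
          MeasurableSpace.comap (fun ω => (X ω, A ω)) inferInstance])
    (ηC : ℝ) (hηC : 0 < ηC)
    (hSpos : ∀ᵐ ω ∂P, ηC ≤ (κ (X ω) (A ω) (Set.Ici h)).toReal)
    (π : ℝ × 𝒳 → ℝ) (hπ : Measurable π) (η : ℝ) (hη : 0 < η)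
    (hπb : ∀ a x, η ≤ π (a, x) ∧ π (a, x) ≤ 1)
    (d : 𝒳 → ℝ) (hd : Measurable d) (hdval : ∀ x, d x = 1 ∨ d x = -1)
    (τ : ℝ) :
    (∀ c : ℝ, 0 ≤ c →
      ∫ ω, max 0 (c * (τ - T ω) + 1) * (if A ω = d (X ω) then (1 : ℝ) else 0)
          / π (A ω, X ω) ∂P
        = ∫ ω, (if T ω ≤ C ω then (1 : ℝ) else 0)
            * max 0 (c * (τ - min (T ω) (C ω)) + 1)
            * (if A ω = d (X ω) then (1 : ℝ) else 0)
            / ((κ (X ω) (A ω) (Set.Ici (min (T ω) (C ω)))).toReal * π (A ω, X ω)) ∂P) ∧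
    ((⨅ c : Set.Ici (0 : ℝ),
        ∫ ω, max 0 ((c : ℝ) * (τ - T ω) + 1) * (if A ω = d (X ω) then (1 : ℝ) else 0)
          / π (A ω, X ω) ∂P)
      = ⨅ c : Set.Ici (0 : ℝ),
        ∫ ω, (if T ω ≤ C ω then (1 : ℝ) else 0)
            * max 0 ((c : ℝ) * (τ - min (T ω) (C ω)) + 1)
            * (if A ω = d (X ω) then (1 : ℝ) else 0)
            / ((κ (X ω) (A ω) (Set.Ici (min (T ω) (C ω)))).toReal * π (A ω, X ω)) ∂P) := by
  have hJ'm : Measurable fun ω => (X ω, A ω) := hX.prodMk hA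
  set J' : Ω → 𝒳 × ℝ := fun ω => (X ω, A ω) with hJ'def
  have hm : MeasurableSpace.comap J' inferInstance ≤ mΩ := hJ'm.comap_le
  haveI : SigmaFinite (P.trim hm) := inferInstance
  -- bounded measurable functions are integrable
  have hbd : ∀ f : Ω → ℝ, Measurable f → ∀ M : ℝ, (∀ ω, |f ω| ≤ M) → Integrable f P :=
    fun f hf M hM => (integrable_const M).mono' (hf.aestronglyMeasurable : AEStronglyMeasurable f P)
      (ae_of_all _ fun ω => by simpa [Real.norm_eq_abs] using hM ω)
  have hκle1 : ∀ x a (t : Set ℝ), (κ x a t).toReal ≤ 1 := by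
    intro x a t
    haveI := hκprob x a
    exact ENNReal.toReal_le_of_le_ofReal one_pos.le (by simpa using prob_le_one)
  -- Step 1: conditional independence + tower property, on rectangles
  have dagger : ∀ (s t : Set ℝ), MeasurableSet s → MeasurableSet t →
      ∀ B : Set (𝒳 × ℝ), MeasurableSet B →
      ∫ ω in J' ⁻¹' B,
          (T ⁻¹' s).indicator (fun _ => (1:ℝ)) ω * (C ⁻¹' t).indicator (fun _ => (1:ℝ)) ω ∂P
        = ∫ ω in J' ⁻¹' B,
          (T ⁻¹' s).indicator (fun _ => (1:ℝ)) ω * (κ (X ω) (A ω) t).toReal ∂P := by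
    intro s t hs ht B hB
    have hBm : MeasurableSet[MeasurableSpace.comap J' inferInstance] (J' ⁻¹' B) := ⟨B, hB, rfl⟩
    have hBΩ : MeasurableSet (J' ⁻¹' B) := hJ'm hB
    set u : Ω → ℝ := (T ⁻¹' s).indicator (fun _ => (1:ℝ)) with hu_def
    set v : Ω → ℝ := (C ⁻¹' t).indicator (fun _ => (1:ℝ)) with hv_def
    set g : Ω → ℝ := fun ω => (κ (X ω) (A ω) t).toReal with hg_def
    have hu_meas : Measurable u := measurable_const.indicator (hT hs)
    have hv_meas : Measurable v := measurable_const.indicator (hC ht)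
    have hg_meas : Measurable g := (hκmeas t ht).comp hJ'm
    have hg_m : Measurable[MeasurableSpace.comap J' inferInstance] g :=
      (hκmeas t ht).comp (measurable_iff_comap_le.mpr le_rfl)
    have hu_bd : ∀ ω, |u ω| ≤ 1 := fun ω => by
      by_cases hω : T ω ∈ s <;> simp [hu_def, Set.indicator, hω]
    have hg_bd : ∀ ω, |g ω| ≤ 1 := fun ω => by
      rw [hg_def, abs_of_nonneg ENNReal.toReal_nonneg]; exact hκle1 _ _ _
    have huv_int : Integrable (fun ω => u ω * v ω) P := by
      refine hbd _ (hu_meas.mul hv_meas) 1 fun ω => ?_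
      rw [abs_mul]
      calc |u ω| * |v ω| ≤ 1 * 1 := by
            refine mul_le_mul (hu_bd ω) ?_ (abs_nonneg _) one_pos.le
            by_cases hω : C ω ∈ t <;> simp [hv_def, Set.indicator, hω]
        _ = 1 := one_mul 1
    have hu_int : Integrable u P := hbd _ hu_meas 1 hu_bd
    have hgu_int : Integrable (fun ω => g ω * u ω) P := by
      refine hbd _ (hg_meas.mul hu_meas) 1 fun ω => ?_
      rw [abs_mul]
      calc |g ω| * |u ω| ≤ 1 * 1 :=
            mul_le_mul (hg_bd ω) (hu_bd ω) (abs_nonneg _) one_pos.le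
        _ = 1 := one_mul 1
    -- conditional independence
    have hcond := (condIndepFun_iff_condExp_inter_preimage_eq_mul
      (m' := MeasurableSpace.comap J' inferInstance) (hm' := hm) hT hC).mp hindep s t hs ht
    -- identification of the censoring conditional expectation
    have hCind : (fun ω => t.indicator (fun _ => (1:ℝ)) (C ω)) = v := by
      funext ω; by_cases hω : C ω ∈ t <;> simp [hv_def, Set.indicator, hω]
    have hκv : P⟦C ⁻¹' t | MeasurableSpace.comap J' inferInstance⟧ =ᵐ[P] g := by
      have h1 := hκver t ht
      rw [hCind] at h1
      exact h1.symm
    have huv_ind : (fun ω => u ω * v ω)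
        = (T ⁻¹' s ∩ C ⁻¹' t).indicator (fun _ => (1:ℝ)) := by
      funext ω
      by_cases h1 : T ω ∈ s <;> by_cases h2 : C ω ∈ t <;>
        simp [hu_def, hv_def, Set.indicator, h1, h2]
    have hmul := condExp_mul_of_stronglyMeasurable_left (m := MeasurableSpace.comap J' inferInstance)
      (μ := P) hg_m.stronglyMeasurable (by exact hgu_int) hu_int
    calc ∫ ω in J' ⁻¹' B, u ω * v ω ∂P
        = ∫ ω in J' ⁻¹' B,
            (P[fun ω => u ω * v ω | MeasurableSpace.comap J' inferInstance]) ω ∂P :=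
          (setIntegral_condExp hm huv_int hBm).symm
      _ = ∫ ω in J' ⁻¹' B, (g * (P[u | MeasurableSpace.comap J' inferInstance])) ω ∂P := by
          refine setIntegral_congr_ae hBΩ ?_
          have h2 : P[fun ω => u ω * v ω | MeasurableSpace.comap J' inferInstance]
              =ᵐ[P] fun ω => (P⟦T ⁻¹' s | MeasurableSpace.comap J' inferInstance⟧) ω
                * (P⟦C ⁻¹' t | MeasurableSpace.comap J' inferInstance⟧) ω := by
            rw [huv_ind]; exact hcond
          filter_upwards [h2, hκv] with ω h2ω hκω _
          rw [h2ω, Pi.mul_apply]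
          rw [hκω, mul_comm]
      _ = ∫ ω in J' ⁻¹' B,
            (P[g * u | MeasurableSpace.comap J' inferInstance]) ω ∂P := by
          refine setIntegral_congr_ae hBΩ ?_
          filter_upwards [hmul] with ω hω _
          rw [hω]
      _ = ∫ ω in J' ⁻¹' B, (g * u) ω ∂P :=
          setIntegral_condExp hm (by exact hgu_int) hBm
      _ = ∫ ω in J' ⁻¹' B, u ω * g ω ∂P := by
          refine setIntegral_congr_ae hBΩ (ae_of_all _ fun ω _ => ?_)
          simp [Pi.mul_apply, mul_comm]
  -- Step 2: change-of-measure identity for arbitrary measurable Ψ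
  have key : ∀ t : Set ℝ, MeasurableSet t → ∀ Ψ : ℝ × 𝒳 × ℝ → ℝ, Measurable Ψ →
      ∫ ω, Ψ (T ω, J' ω) * (C ⁻¹' t).indicator (fun _ => (1:ℝ)) ω ∂P
        = ∫ ω, Ψ (T ω, J' ω) * (κ (X ω) (A ω) t).toReal ∂P := by
    intro t ht Ψ hΨ
    set J : Ω → ℝ × 𝒳 × ℝ := fun ω => (T ω, J' ω) with hJdef
    have hJ : Measurable J := hT.prodMk hJ'm
    set N₁ : Ω → ℝ≥0 := (C ⁻¹' t).indicator (fun _ => (1:ℝ≥0)) with hN₁def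
    set N₂ : Ω → ℝ≥0 := fun ω => Real.toNNReal ((κ (X ω) (A ω) t).toReal) with hN₂def
    have hN₁ : Measurable N₁ := measurable_const.indicator (hC ht)
    have hN₂ : Measurable N₂ := measurable_real_toNNReal.comp ((hκmeas t ht).comp hJ'm)
    -- rectangle values agree
    have rect : ∀ (s : Set ℝ) (B : Set (𝒳 × ℝ)), MeasurableSet s → MeasurableSet B →
        Measure.map J (P.withDensity fun ω => (N₁ ω : ℝ≥0∞)) (s ×ˢ B)
          = Measure.map J (P.withDensity fun ω => (N₂ ω : ℝ≥0∞)) (s ×ˢ B) := by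
      intro s B hs hB
      have hsB : MeasurableSet (s ×ˢ B) := hs.prod hB
      have hpre : J ⁻¹' (s ×ˢ B) = T ⁻¹' s ∩ J' ⁻¹' B := by
        ext ω; simp [hJdef, Set.mem_prod]
      have huv_int : Integrable (fun ω =>
          (T ⁻¹' s).indicator (fun _ => (1:ℝ)) ω * (C ⁻¹' t).indicator (fun _ => (1:ℝ)) ω)
          (P.restrict (J' ⁻¹' B)) := by
        refine Integrable.restrict (hbd _ ((measurable_const.indicator (hT hs)).mul
          (measurable_const.indicator (hC ht))) 1 fun ω => ?_)
        by_cases h1 : T ω ∈ s <;> by_cases h2 : C ω ∈ t <;>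
          simp [Set.indicator, h1, h2]
      have hug_int : Integrable (fun ω =>
          (T ⁻¹' s).indicator (fun _ => (1:ℝ)) ω * (κ (X ω) (A ω) t).toReal)
          (P.restrict (J' ⁻¹' B)) := by
        refine Integrable.restrict (hbd _ ((measurable_const.indicator (hT hs)).mul
          ((hκmeas t ht).comp hJ'm)) 1 fun ω => ?_)
        show |(T ⁻¹' s).indicator (fun _ => (1:ℝ)) ω * (κ (X ω) (A ω) t).toReal| ≤ 1
        by_cases h1 : ω ∈ T ⁻¹' s
        · rw [Set.indicator_of_mem h1, one_mul, abs_of_nonneg ENNReal.toReal_nonneg]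
          exact hκle1 _ _ _
        · rw [Set.indicator_of_notMem h1, zero_mul, abs_zero]; norm_num
      rw [Measure.map_apply hJ hsB, Measure.map_apply hJ hsB,
        withDensity_apply _ (hJ hsB), withDensity_apply _ (hJ hsB), hpre]
      have l1 : ∫⁻ ω in T ⁻¹' s ∩ J' ⁻¹' B, (N₁ ω : ℝ≥0∞) ∂P
          = ∫⁻ ω in J' ⁻¹' B, ENNReal.ofReal
              ((T ⁻¹' s).indicator (fun _ => (1:ℝ)) ω
                * (C ⁻¹' t).indicator (fun _ => (1:ℝ)) ω) ∂P := by
        rw [← lintegral_indicator ((hT hs).inter (hJ'm hB)),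
          ← lintegral_indicator (hJ'm hB)]
        refine lintegral_congr fun ω => ?_
        by_cases h1 : T ω ∈ s <;> by_cases h2 : ω ∈ J' ⁻¹' B <;> by_cases h3 : C ω ∈ t <;>
          simp [Set.indicator, hN₁def, h1, h2, h3]
      have l2 : ∫⁻ ω in T ⁻¹' s ∩ J' ⁻¹' B, (N₂ ω : ℝ≥0∞) ∂P
          = ∫⁻ ω in J' ⁻¹' B, ENNReal.ofReal
              ((T ⁻¹' s).indicator (fun _ => (1:ℝ)) ω * (κ (X ω) (A ω) t).toReal) ∂P := by
        rw [← lintegral_indicator ((hT hs).inter (hJ'm hB)),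
          ← lintegral_indicator (hJ'm hB)]
        refine lintegral_congr fun ω => ?_
        by_cases h1 : T ω ∈ s <;> by_cases h2 : ω ∈ J' ⁻¹' B <;>
          simp [Set.indicator, hN₂def, h1, h2, ENNReal.ofReal]
      rw [l1, l2,
        ← ofReal_integral_eq_lintegral_ofReal huv_int (ae_of_all _ fun ω => by
          by_cases h1 : T ω ∈ s <;> by_cases h2 : C ω ∈ t <;>
            simp [Set.indicator, h1, h2]),
        ← ofReal_integral_eq_lintegral_ofReal hug_int (ae_of_all _ fun ω => by
          by_cases h1 : T ω ∈ s
          · exact mul_nonneg (by simp [Set.indicator, h1]) ENNReal.toReal_nonneg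
          · simp [Set.indicator, h1]),
        dagger s t hs ht B hB]
    haveI : IsFiniteMeasure (Measure.map J (P.withDensity fun ω => (N₁ ω : ℝ≥0∞))) := by
      constructor
      rw [Measure.map_apply hJ MeasurableSet.univ]
      rw [withDensity_apply _ (hJ MeasurableSet.univ), Set.preimage_univ,
        Measure.restrict_univ]
      refine lt_of_le_of_lt (lintegral_mono fun ω => ?_) (?_ : ∫⁻ _, (1:ℝ≥0∞) ∂P < ⊤)
      · by_cases h3 : C ω ∈ t <;> simp [hN₁def, Set.indicator, h3]
      · rw [lintegral_one]; exact measure_lt_top _ _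
    have mu_eq : Measure.map J (P.withDensity fun ω => (N₁ ω : ℝ≥0∞))
        = Measure.map J (P.withDensity fun ω => (N₂ ω : ℝ≥0∞)) := by
      refine ext_of_generate_finite _ generateFrom_prod.symm isPiSystem_prod ?_ ?_
      · rintro _ ⟨s, hs, B, hB, rfl⟩
        exact rect s B hs hB
      · rw [← Set.univ_prod_univ]
        exact rect _ _ MeasurableSet.univ MeasurableSet.univ
    have e1 : ∫ ω, Ψ (J ω) * (C ⁻¹' t).indicator (fun _ => (1:ℝ)) ω ∂P
        = ∫ x, Ψ x ∂(Measure.map J (P.withDensity fun ω => (N₁ ω : ℝ≥0∞))) := by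
      rw [integral_map hJ.aemeasurable hΨ.aestronglyMeasurable,
        integral_withDensity_eq_integral_smul hN₁]
      refine integral_congr_ae (ae_of_all _ fun ω => ?_)
      by_cases h3 : C ω ∈ t <;>
        simp [hN₁def, Set.indicator, h3, NNReal.smul_def, mul_comm]
    have e2 : ∫ ω, Ψ (J ω) * (κ (X ω) (A ω) t).toReal ∂P
        = ∫ x, Ψ x ∂(Measure.map J (P.withDensity fun ω => (N₂ ω : ℝ≥0∞))) := by
      rw [integral_map hJ.aemeasurable hΨ.aestronglyMeasurable,
        integral_withDensity_eq_integral_smul hN₂]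
      refine integral_congr_ae (ae_of_all _ fun ω => ?_)
      show Ψ (J ω) * (κ (X ω) (A ω) t).toReal
          = Real.toNNReal ((κ (X ω) (A ω) t).toReal) • Ψ (J ω)
      rw [NNReal.smul_def, Real.coe_toNNReal _ ENNReal.toReal_nonneg, mul_comm]
      rw [smul_eq_mul]
    rw [e1, e2, mu_eq]
  -- Step 3: the main identity for arbitrary bounded measurable Ψ
  have main : ∀ Ψ : ℝ × 𝒳 × ℝ → ℝ, Measurable Ψ → ∀ M : ℝ, (∀ q, |Ψ q| ≤ M) →
      ∫ ω, Ψ (T ω, J' ω) * (if T ω ≤ C ω then (1:ℝ) else 0) ∂P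
        = ∫ ω, Ψ (T ω, J' ω) * (κ (X ω) (A ω) (Set.Ici (T ω))).toReal ∂P := by
    intro Ψ hΨ M hM
    have hdyT : ∀ n : ℕ, Measurable fun ω => dyF n (T ω) := fun n =>
      ((measurable_of_countable (fun k : ℤ => ((k : ℝ) / 2 ^ n))).comp
        (Int.measurable_floor.comp (hT.mul_const _)))
    have hΨJ : Measurable fun ω => Ψ (T ω, J' ω) := hΨ.comp (hT.prodMk hJ'm)
    -- per-level identity
    have hstep : ∀ n : ℕ,
        ∫ ω, Ψ (T ω, J' ω) * (if dyF n (T ω) ≤ C ω then (1:ℝ) else 0) ∂P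
          = ∫ ω, Ψ (T ω, J' ω) * (κ (X ω) (A ω) (Ici (dyF n (T ω)))).toReal ∂P := by
      intro n
      set K : ℕ := ⌈h * 2 ^ n⌉₊ with hK
      set Ψk : ℕ → ℝ × 𝒳 × ℝ → ℝ :=
        fun k q => Ψ q * (if ⌊q.1 * 2 ^ n⌋ = (k:ℤ) then (1:ℝ) else 0) with hΨkdef
      have hΨk_meas : ∀ k, Measurable (Ψk k) := fun k => hΨ.mul
        (Measurable.ite ((Int.measurable_floor.comp (measurable_fst.mul_const _))
          (measurableSet_singleton (k:ℤ))) measurable_const measurable_const)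
      have hind : ∀ (r : ℝ) ω, (C ⁻¹' Ici r).indicator (fun _ => (1:ℝ)) ω
          = if r ≤ C ω then 1 else 0 := fun r ω => by
        by_cases hc : r ≤ C ω <;> simp [Set.indicator, Set.mem_Ici, hc]
      have hΨkbd : ∀ k q, |Ψk k q| ≤ M := fun k q => by
        rw [hΨkdef]
        simp only []
        rw [abs_mul]
        calc |Ψ q| * |if ⌊q.1 * 2 ^ n⌋ = (k:ℤ) then (1:ℝ) else 0| ≤ M * 1 := by
              refine mul_le_mul (hM q) ?_ (abs_nonneg _) ((abs_nonneg _).trans (hM q))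
              split <;> simp
          _ = M := mul_one M
      -- decomposition facts
      have hdec : ∀ᵐ ω ∂P, (⌊T ω * 2 ^ n⌋.toNat ∈ Finset.range (K+1)
          ∧ ((⌊T ω * 2 ^ n⌋.toNat : ℕ) : ℤ) = ⌊T ω * 2 ^ n⌋) := by
        filter_upwards [hTb] with ω hω
        obtain ⟨h0, hh'⟩ := hω
        have hk0 : (0:ℤ) ≤ ⌊T ω * 2 ^ n⌋ :=
          Int.floor_nonneg.mpr (mul_nonneg h0 (by positivity))
        have hkK : ⌊T ω * 2 ^ n⌋ ≤ (K:ℤ) := by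
          have h1 : T ω * 2 ^ n ≤ ((K:ℕ) : ℝ) :=
            le_trans (mul_le_mul_of_nonneg_right hh' (by positivity)) (Nat.le_ceil _)
          calc ⌊T ω * 2 ^ n⌋ ≤ ⌊((K:ℕ) : ℝ)⌋ := Int.floor_le_floor h1
            _ = (K:ℤ) := Int.floor_natCast K
        exact ⟨Finset.mem_range.mpr (Nat.lt_succ_of_le (Int.toNat_le.mpr hkK)),
          Int.toNat_of_nonneg hk0⟩
      have hsum1 : ∀ᵐ ω ∂P, Ψ (T ω, J' ω) * (if dyF n (T ω) ≤ C ω then (1:ℝ) else 0)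
          = ∑ k ∈ Finset.range (K+1), Ψk k (T ω, J' ω)
              * (C ⁻¹' Ici ((k:ℝ)/2^n)).indicator (fun _ => (1:ℝ)) ω := by
        filter_upwards [hdec] with ω hω
        obtain ⟨hmem, hcast⟩ := hω
        rw [Finset.sum_eq_single_of_mem _ hmem ?_]
        · have hcastR : ((⌊T ω * 2 ^ n⌋.toNat : ℕ) : ℝ) = ((⌊T ω * 2 ^ n⌋ : ℤ) : ℝ) := by
            exact_mod_cast congrArg (fun z : ℤ => (z : ℝ)) hcast
          rw [hind]
          simp only [hΨkdef]
          rw [if_pos hcast.symm, mul_one, hcastR]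
          rfl
        · intro b _ hbne
          simp only [hΨkdef]
          rw [if_neg fun hcontra => hbne (by rw [← Int.toNat_natCast b, ← hcontra]),
            mul_zero, zero_mul]
      have hsum2 : ∀ᵐ ω ∂P, Ψ (T ω, J' ω) * (κ (X ω) (A ω) (Ici (dyF n (T ω)))).toReal
          = ∑ k ∈ Finset.range (K+1), Ψk k (T ω, J' ω)
              * (κ (X ω) (A ω) (Ici ((k:ℝ)/2^n))).toReal := by
        filter_upwards [hdec] with ω hω
        obtain ⟨hmem, hcast⟩ := hω
        rw [Finset.sum_eq_single_of_mem _ hmem ?_]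
        · have hcastR : ((⌊T ω * 2 ^ n⌋.toNat : ℕ) : ℝ) = ((⌊T ω * 2 ^ n⌋ : ℤ) : ℝ) := by
            exact_mod_cast congrArg (fun z : ℤ => (z : ℝ)) hcast
          simp only [hΨkdef]
          rw [if_pos hcast.symm, mul_one, hcastR]
          rfl
        · intro b _ hbne
          simp only [hΨkdef]
          rw [if_neg fun hcontra => hbne (by rw [← Int.toNat_natCast b, ← hcontra]),
            mul_zero, zero_mul]
      have hint1 : ∀ k : ℕ, Integrable (fun ω => Ψk k (T ω, J' ω)
          * (C ⁻¹' Ici ((k:ℝ)/2^n)).indicator (fun _ => (1:ℝ)) ω) P := by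
        intro k
        refine hbd _ (((hΨk_meas k).comp (hT.prodMk hJ'm)).mul
          (measurable_const.indicator (hC measurableSet_Ici))) M fun ω => ?_
        rw [abs_mul, hind]
        calc |Ψk k (T ω, J' ω)| * |if ((k:ℕ):ℝ)/2^n ≤ C ω then (1:ℝ) else 0| ≤ M * 1 := by
              refine mul_le_mul (hΨkbd k (T ω, J' ω)) ?_ (abs_nonneg _)
                ((abs_nonneg (Ψk k (T ω, J' ω))).trans (hΨkbd k (T ω, J' ω)))
              split <;> simp
          _ = M := mul_one M
      have hint2 : ∀ k : ℕ, Integrable (fun ω => Ψk k (T ω, J' ω)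
          * (κ (X ω) (A ω) (Ici ((k:ℝ)/2^n))).toReal) P := by
        intro k
        refine hbd _ (((hΨk_meas k).comp (hT.prodMk hJ'm)).mul
          ((hκmeas _ measurableSet_Ici).comp hJ'm)) M fun ω => ?_
        rw [abs_mul, abs_of_nonneg ENNReal.toReal_nonneg]
        calc |Ψk k (T ω, J' ω)| * (κ (X ω) (A ω) (Ici ((k:ℝ)/2^n))).toReal ≤ M * 1 :=
              mul_le_mul (hΨkbd k (T ω, J' ω)) (hκle1 _ _ _) ENNReal.toReal_nonneg
                ((abs_nonneg (Ψk k (T ω, J' ω))).trans (hΨkbd k (T ω, J' ω)))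
          _ = M := mul_one M
      calc ∫ ω, Ψ (T ω, J' ω) * (if dyF n (T ω) ≤ C ω then (1:ℝ) else 0) ∂P
          = ∫ ω, ∑ k ∈ Finset.range (K+1), Ψk k (T ω, J' ω)
              * (C ⁻¹' Ici ((k:ℝ)/2^n)).indicator (fun _ => (1:ℝ)) ω ∂P :=
            integral_congr_ae hsum1
        _ = ∑ k ∈ Finset.range (K+1), ∫ ω, Ψk k (T ω, J' ω)
              * (C ⁻¹' Ici ((k:ℝ)/2^n)).indicator (fun _ => (1:ℝ)) ω ∂P :=
            integral_finset_sum _ fun k _ => hint1 k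
        _ = ∑ k ∈ Finset.range (K+1), ∫ ω, Ψk k (T ω, J' ω)
              * (κ (X ω) (A ω) (Ici ((k:ℝ)/2^n))).toReal ∂P :=
            Finset.sum_congr rfl fun k _ =>
              key (Ici ((k:ℝ)/2^n)) measurableSet_Ici (Ψk k) (hΨk_meas k)
        _ = ∫ ω, ∑ k ∈ Finset.range (K+1), Ψk k (T ω, J' ω)
              * (κ (X ω) (A ω) (Ici ((k:ℝ)/2^n))).toReal ∂P :=
            (integral_finset_sum _ fun k _ => hint2 k).symm
        _ = ∫ ω, Ψ (T ω, J' ω) * (κ (X ω) (A ω) (Ici (dyF n (T ω)))).toReal ∂P :=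
            (integral_congr_ae hsum2).symm
    -- dominated convergence on each side
    have hlim1 : Tendsto (fun n => ∫ ω, Ψ (T ω, J' ω)
          * (if dyF n (T ω) ≤ C ω then (1:ℝ) else 0) ∂P) atTop
        (𝓝 (∫ ω, Ψ (T ω, J' ω) * (if T ω ≤ C ω then (1:ℝ) else 0) ∂P)) := by
      refine tendsto_integral_of_dominated_convergence (fun _ => M) ?_ (integrable_const M)
        ?_ ?_
      · intro n
        exact (hΨJ.mul (Measurable.ite (measurableSet_le (hdyT n) hC)
          measurable_const measurable_const)).aestronglyMeasurable
      · intro n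
        refine ae_of_all _ fun ω => ?_
        rw [Real.norm_eq_abs, abs_mul]
        calc |Ψ (T ω, J' ω)| * |if dyF n (T ω) ≤ C ω then (1:ℝ) else 0| ≤ M * 1 := by
              refine mul_le_mul (hM _) ?_ (abs_nonneg _) ((abs_nonneg (Ψ (T ω, J' ω))).trans (hM (T ω, J' ω)))
              split <;> simp
          _ = M := mul_one M
      · refine ae_of_all _ fun ω => ?_
        by_cases hTC : T ω ≤ C ω
        · have hup : ∀ n : ℕ, (if dyF n (T ω) ≤ C ω then (1:ℝ) else 0) = 1 :=
            fun n => if_pos ((dyF_le n (T ω)).trans hTC)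
          simp only [hup, if_pos hTC]
          exact tendsto_const_nhds
        · have hev : (fun n : ℕ => Ψ (T ω, J' ω) * (if dyF n (T ω) ≤ C ω then (1:ℝ) else 0))
              =ᶠ[atTop] fun _ => 0 := by
            filter_upwards [(dyF_tendsto (T ω)).eventually
              (eventually_gt_nhds (not_le.mp hTC))] with n hn
            rw [if_neg (not_le.mpr hn), mul_zero]
          rw [if_neg hTC, mul_zero]
          exact Tendsto.congr' hev.symm tendsto_const_nhds
    have hlim2 : Tendsto (fun n => ∫ ω, Ψ (T ω, J' ω)
          * (κ (X ω) (A ω) (Ici (dyF n (T ω)))).toReal ∂P) atTop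
        (𝓝 (∫ ω, Ψ (T ω, J' ω) * (κ (X ω) (A ω) (Set.Ici (T ω))).toReal ∂P)) := by
      refine tendsto_integral_of_dominated_convergence (fun _ => M) ?_ (integrable_const M)
        ?_ ?_
      · intro n
        exact (hΨJ.mul ((measS κ hκprob hκmeas).comp
          ((hdyT n).prodMk hJ'm))).aestronglyMeasurable
      · intro n
        refine ae_of_all _ fun ω => ?_
        rw [Real.norm_eq_abs, abs_mul, abs_of_nonneg ENNReal.toReal_nonneg]
        calc |Ψ (T ω, J' ω)| * (κ (X ω) (A ω) (Ici (dyF n (T ω)))).toReal ≤ M * 1 :=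
              mul_le_mul (hM _) (hκle1 _ _ _) ENNReal.toReal_nonneg
                ((abs_nonneg (Ψ (T ω, J' ω))).trans (hM (T ω, J' ω)))
          _ = M := mul_one M
      · refine ae_of_all _ fun ω => ?_
        haveI := hκprob (X ω) (A ω)
        exact (tendsto_S (κ (X ω) (A ω)) (T ω)).const_mul (Ψ (T ω, J' ω))
    have heq : (fun n => ∫ ω, Ψ (T ω, J' ω)
        * (if dyF n (T ω) ≤ C ω then (1:ℝ) else 0) ∂P)
        = fun n => ∫ ω, Ψ (T ω, J' ω) * (κ (X ω) (A ω) (Ici (dyF n (T ω)))).toReal ∂P :=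
      funext hstep
    exact tendsto_nhds_unique (heq ▸ hlim1) hlim2
  -- Part 1
  have part1 : ∀ c : ℝ, 0 ≤ c →
      ∫ ω, max 0 (c * (τ - T ω) + 1) * (if A ω = d (X ω) then (1 : ℝ) else 0)
          / π (A ω, X ω) ∂P
        = ∫ ω, (if T ω ≤ C ω then (1 : ℝ) else 0)
            * max 0 (c * (τ - min (T ω) (C ω)) + 1)
            * (if A ω = d (X ω) then (1 : ℝ) else 0)
            / ((κ (X ω) (A ω) (Set.Ici (min (T ω) (C ω)))).toReal * π (A ω, X ω)) ∂P := by
    intro c hc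
    set Ψc : ℝ × 𝒳 × ℝ → ℝ := fun q =>
      (Icc (0:ℝ) h).indicator (fun _ => (1:ℝ)) q.1 * max 0 (c * (τ - q.1) + 1)
        * (if q.2.2 = d q.2.1 then (1:ℝ) else 0)
        / (max ((κ q.2.1 q.2.2 (Ici q.1)).toReal) ηC * π (q.2.2, q.2.1)) with hΨcdef
    have hΨc_meas : Measurable Ψc := by
      refine Measurable.div ?_ ?_
      · refine Measurable.mul (Measurable.mul ?_ ?_) ?_
        · exact (measurable_const.indicator measurableSet_Icc).comp measurable_fst
        · exact measurable_const.max
            (((measurable_const.sub measurable_fst).const_mul c).add_const 1)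
        · exact Measurable.ite (measurableSet_eq_fun measurable_snd.snd
            (hd.comp measurable_snd.fst)) measurable_const measurable_const
      · exact ((measS κ hκprob hκmeas).max measurable_const).mul
          (hπ.comp (measurable_snd.snd.prodMk measurable_snd.fst))
    set M : ℝ := max 0 (c * τ + 1) / (ηC * η) with hMdef
    have hden_pos : 0 < ηC * η := mul_pos hηC hη
    have hΨc_bd : ∀ q, |Ψc q| ≤ M := by
      intro q
      have hif01 : (0:ℝ) ≤ (if q.2.2 = d q.2.1 then (1:ℝ) else 0) ∧
          (if q.2.2 = d q.2.1 then (1:ℝ) else 0) ≤ 1 := by split <;> norm_num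
      have hnum_nonneg : 0 ≤ (Icc (0:ℝ) h).indicator (fun _ => (1:ℝ)) q.1
          * max 0 (c * (τ - q.1) + 1) * (if q.2.2 = d q.2.1 then (1:ℝ) else 0) := by
        refine mul_nonneg (mul_nonneg ?_ (le_max_left _ _)) hif01.1
        by_cases hq : q.1 ∈ Icc (0:ℝ) h <;> simp [Set.indicator, hq]
      have hnum_le : (Icc (0:ℝ) h).indicator (fun _ => (1:ℝ)) q.1
          * max 0 (c * (τ - q.1) + 1) * (if q.2.2 = d q.2.1 then (1:ℝ) else 0)
          ≤ max 0 (c * τ + 1) := by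
        by_cases hq : q.1 ∈ Icc (0:ℝ) h
        · rw [Set.indicator_of_mem hq, one_mul]
          have h1 : max 0 (c * (τ - q.1) + 1) ≤ max 0 (c * τ + 1) :=
            max_le_max le_rfl (by nlinarith [hq.1])
          calc max 0 (c * (τ - q.1) + 1) * (if q.2.2 = d q.2.1 then (1:ℝ) else 0)
              ≤ max 0 (c * (τ - q.1) + 1) * 1 :=
                mul_le_mul_of_nonneg_left hif01.2 (le_max_left _ _)
            _ = max 0 (c * (τ - q.1) + 1) := mul_one _
            _ ≤ max 0 (c * τ + 1) := h1
        · rw [Set.indicator_of_notMem hq, zero_mul, zero_mul]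
          exact le_max_left _ _
      have hden_ge : ηC * η ≤ max ((κ q.2.1 q.2.2 (Ici q.1)).toReal) ηC * π (q.2.2, q.2.1) :=
        mul_le_mul (le_max_right _ _) (hπb _ _).1 hη.le
          (le_trans hηC.le (le_max_right _ _))
      rw [hΨcdef]
      simp only []
      rw [abs_div, abs_of_nonneg hnum_nonneg, abs_of_nonneg (le_trans hden_pos.le hden_ge),
        hMdef]
      exact div_le_div₀ (le_max_left _ _) hnum_le hden_pos hden_ge
    have hmain := main Ψc hΨc_meas M hΨc_bd
    have e_left : ∫ ω, max 0 (c * (τ - T ω) + 1) * (if A ω = d (X ω) then (1 : ℝ) else 0)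
          / π (A ω, X ω) ∂P
        = ∫ ω, Ψc (T ω, J' ω) * (κ (X ω) (A ω) (Set.Ici (T ω))).toReal ∂P := by
      refine integral_congr_ae ?_
      filter_upwards [hTb, hSpos] with ω hωT hωS
      haveI := hκprob (X ω) (A ω)
      have hST : ηC ≤ (κ (X ω) (A ω) (Ici (T ω))).toReal :=
        le_trans hωS (ENNReal.toReal_mono (measure_ne_top _ _)
          (measure_mono (Ici_subset_Ici.mpr hωT.2)))
      have hmem : T ω ∈ Icc (0:ℝ) h := ⟨hωT.1, hωT.2⟩
      have hSne : (κ (X ω) (A ω) (Ici (T ω))).toReal ≠ 0 := (lt_of_lt_of_le hηC hST).ne'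
      have hπne : π (A ω, X ω) ≠ 0 := (lt_of_lt_of_le hη (hπb (A ω) (X ω)).1).ne'
      rw [hΨcdef]
      simp only [hJ'def, Set.indicator_of_mem hmem, one_mul, max_eq_left hST]
      field_simp
    have e_right : ∫ ω, (if T ω ≤ C ω then (1 : ℝ) else 0)
            * max 0 (c * (τ - min (T ω) (C ω)) + 1)
            * (if A ω = d (X ω) then (1 : ℝ) else 0)
            / ((κ (X ω) (A ω) (Set.Ici (min (T ω) (C ω)))).toReal * π (A ω, X ω)) ∂P
        = ∫ ω, Ψc (T ω, J' ω) * (if T ω ≤ C ω then (1:ℝ) else 0) ∂P := by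
      refine integral_congr_ae ?_
      filter_upwards [hTb, hSpos] with ω hωT hωS
      haveI := hκprob (X ω) (A ω)
      have hST : ηC ≤ (κ (X ω) (A ω) (Ici (T ω))).toReal :=
        le_trans hωS (ENNReal.toReal_mono (measure_ne_top _ _)
          (measure_mono (Ici_subset_Ici.mpr hωT.2)))
      have hmem : T ω ∈ Icc (0:ℝ) h := ⟨hωT.1, hωT.2⟩
      by_cases hTC : T ω ≤ C ω
      · have hmin : min (T ω) (C ω) = T ω := min_eq_left hTC
        rw [hΨcdef]
        simp only [hJ'def, hmin, if_pos hTC, Set.indicator_of_mem hmem, one_mul, mul_one,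
          max_eq_left hST]
      · have : (if T ω ≤ C ω then (1:ℝ) else 0) = 0 := if_neg hTC
        rw [this, zero_mul, zero_mul, zero_div, mul_zero]
    rw [e_left, e_right, ← hmain]
  exact ⟨part1, iInf_congr fun c => part1 c c.2⟩
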